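/- Let D = {0,...,n} and k ≥ 1. List the words of D^k in increasing lexicographic order as w_0, w_1, ..., w_{(n+1)^k - 1}, and let W_0 be their concatenation in this order. Let c be the word W_0 followed by k-1 zeros. Then for every word w of length k over D, the number of positions 1 ≤ j ≤ k·(n+1)^k such that c_j c_{j+1} ... c_{j+k-1} = w equals exactly k. -/
import Mathlib

private def bval (b : ℕ) : ℕ → (ℕ → ℕ) → ℕ
  | 0, _ => 0
  | L + 1, d => d 0 + b * bval b L (fun i => d (i + 1))

private theorem bval_lt {b : ℕ} (hb : 1 ≤ b) :
    ∀ (L : ℕ) (d : ℕ → ℕ), (∀ i < L, d i < b) → bval b L d < b ^ L := by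
  intro L
  induction L with
  | zero => intro d _; simp [bval]
  | succ L ih =>
    intro d hd
    have h0 : d 0 < b := hd 0 (by omega)
    have h1 : bval b L (fun i => d (i + 1)) + 1 ≤ b ^ L :=
      ih _ (fun i hi => hd (i + 1) (by omega))
    have h2 : b * (bval b L (fun i => d (i + 1)) + 1) ≤ b * b ^ L :=
      Nat.mul_le_mul_left b h1
    rw [Nat.mul_add, Nat.mul_one] at h2
    have h3 : b ^ (L + 1) = b * b ^ L := by rw [pow_succ']
    simp only [bval]
    omega

private theorem bdigits_iff {b : ℕ} (hb : 1 ≤ b) :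
    ∀ (L m : ℕ) (d : ℕ → ℕ), (∀ i < L, d i < b) →
      ((∀ i < L, m / b ^ i % b = d i) ↔ m % b ^ L = bval b L d) := by
  intro L
  induction L with
  | zero => intro m d _; simp [bval, Nat.mod_one]
  | succ L ih =>
    intro m d hd
    have hd0 : d 0 < b := hd 0 (by omega)
    have hdv : bval b L (fun i => d (i + 1)) < b ^ L :=
      bval_lt hb L _ (fun i hi => hd (i + 1) (by omega))
    have key : m % b ^ (L + 1) = m % b + b * (m / b % b ^ L) := by
      rw [pow_succ']; exact Nat.mod_mul
    have hdiv : ∀ i : ℕ, m / b ^ (i + 1) = m / b / b ^ i := by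
      intro i
      rw [Nat.div_div_eq_div_mul, pow_succ']
    constructor
    · intro h
      have h0 : m % b = d 0 := by simpa using h 0 (by omega)
      have h1 : m / b % b ^ L = bval b L (fun i => d (i + 1)) := by
        apply (ih (m / b) _ (fun i hi => hd (i + 1) (by omega))).mp
        intro i hi
        rw [← hdiv i]
        exact h (i + 1) (by omega)
      show m % b ^ (L + 1) = d 0 + b * bval b L (fun i => d (i + 1))
      rw [key, h0, h1]
    · intro h
      have e : m % b + b * (m / b % b ^ L) = d 0 + b * bval b L (fun i => d (i + 1)) := by
        rw [← key]; exact h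
      have e0 : m % b = d 0 := by
        have h5 := congrArg (· % b) e
        simpa [Nat.add_mul_mod_self_left, Nat.mod_eq_of_lt hd0] using h5
      have e1 : m / b % b ^ L = bval b L (fun i => d (i + 1)) := by
        have h6 : b * (m / b % b ^ L) = b * bval b L (fun i => d (i + 1)) := by omega
        exact Nat.eq_of_mul_eq_mul_left hb h6
      intro i hi
      match i with
      | 0 => simpa using e0
      | i + 1 =>
        rw [hdiv i]
        exact (ih (m / b) _ (fun i hi => hd (i + 1) (by omega))).mpr e1 i (by omega)

theorem champernowne_block_count (n k : ℕ) (hn : 1 ≤ n) (hk : 1 ≤ k)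
    (c : ℕ → ℕ)
    (hc : ∀ j, c j =
      if j < k * (n + 1) ^ k then ((j / k) / (n + 1) ^ (k - 1 - j % k)) % (n + 1) else 0)
    (w : ℕ → ℕ) (hw : ∀ t < k, w t ≤ n) :
    ((Finset.range (k * (n + 1) ^ k)).filter (fun j => ∀ t < k, c (j + t) = w t)).card = k := by
  set b := n + 1 with hbdef
  have hb1 : 1 ≤ b := by omega
  set Sv : ℕ → ℕ := fun r => bval b (k - r) (fun i => w (k - 1 - r - i)) with hSvdef
  set Pv : ℕ → ℕ := fun r => bval b r (fun i => w (k - 1 - i)) with hPvdef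
  set Hv : ℕ → ℕ := fun r =>
    if Sv r + 1 = b ^ (k - r) then (if Pv r = 0 then b ^ r - 1 else Pv r - 1) else Pv r
    with hHvdef
  set f : ℕ → ℕ := fun r => k * (Hv r * b ^ (k - r) + Sv r) + r with hfdef
  have hSlt : ∀ r, r < k → Sv r < b ^ (k - r) := by
    intro r hr
    exact bval_lt hb1 _ _ (fun i hi => by have := hw (k - 1 - r - i) (by omega); omega)
  have hPlt : ∀ r, r < k → Pv r < b ^ r := by
    intro r hr
    exact bval_lt hb1 _ _ (fun i hi => by have := hw (k - 1 - i) (by omega); omega)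
  have hHlt : ∀ r, r < k → Hv r < b ^ r := by
    intro r hr
    have h1 : 1 ≤ b ^ r := Nat.one_le_pow _ _ (by omega)
    have h2 := hPlt r hr
    simp only [hHvdef]
    split
    · split <;> omega
    · omega
  have hl0lt : ∀ r, r < k → Hv r * b ^ (k - r) + Sv r < b ^ k := by
    intro r hr
    have hpow : b ^ r * b ^ (k - r) = b ^ k := by rw [← pow_add]; congr 1; omega
    have h1 : (Hv r + 1) * b ^ (k - r) ≤ b ^ r * b ^ (k - r) :=
      Nat.mul_le_mul_right _ (hHlt r hr)
    rw [Nat.add_mul, Nat.one_mul] at h1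
    have h2 := hSlt r hr
    omega
  -- characterization of the occurrence condition
  have hc' : ∀ r, r < k → ∀ l, l < b ^ k →
      ((∀ t < k, c (k * l + r + t) = w t) ↔
        (l % b ^ (k - r) = Sv r ∧ (l + 1) / b ^ (k - r) % b ^ r = Pv r)) := by
    intro r hr l hl
    have low : ∀ t, t < k - r → c (k * l + r + t) = l / b ^ (k - 1 - r - t) % b := by
      intro t ht
      have hj : k * l + r + t < k * b ^ k := by
        have h1 : k * (l + 1) ≤ k * b ^ k := Nat.mul_le_mul_left k hl
        rw [Nat.mul_add, Nat.mul_one] at h1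
        omega
      rw [hc, if_pos hj]
      have hdv : (k * l + (r + t)) / k = l := by
        rw [Nat.mul_add_div (by omega), Nat.div_eq_of_lt (by omega)]
        omega
      have hmd : (k * l + (r + t)) % k = r + t := by
        rw [Nat.mul_add_mod]
        exact Nat.mod_eq_of_lt (by omega)
      rw [Nat.add_assoc, hdv, hmd, show k - 1 - (r + t) = k - 1 - r - t from by omega]
    have high : ∀ s, s < r → c (k * l + r + (k - r + s)) = (l + 1) / b ^ (k - 1 - s) % b := by
      intro s hs
      have harg : k * l + r + (k - r + s) = k * (l + 1) + s := by
        rw [Nat.mul_add, Nat.mul_one]; omega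
      rw [harg]
      rcases Nat.lt_or_ge (l + 1) (b ^ k) with h | h
      · have hj : k * (l + 1) + s < k * b ^ k := by
          have h1 : k * (l + 1 + 1) ≤ k * b ^ k := Nat.mul_le_mul_left k h
          rw [Nat.mul_add, Nat.mul_one] at h1
          omega
        rw [hc, if_pos hj]
        have hdv : (k * (l + 1) + s) / k = l + 1 := by
          rw [Nat.mul_add_div (by omega), Nat.div_eq_of_lt (by omega)]
        have hmd : (k * (l + 1) + s) % k = s := by
          rw [Nat.mul_add_mod]
          exact Nat.mod_eq_of_lt (by omega)
        rw [hdv, hmd]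
      · have hl1 : l + 1 = b ^ k := by omega
        have hj : ¬ (k * (l + 1) + s < k * b ^ k) := by
          rw [hl1]; omega
        rw [hc, if_neg hj, hl1]
        rw [Nat.pow_div (by omega) (by omega)]
        rw [show k - (k - 1 - s) = s + 1 from by omega, pow_succ]
        simp [Nat.mul_mod_left]
    constructor
    · intro h
      constructor
      · apply (bdigits_iff hb1 (k - r) l _
          (fun i hi => by have := hw (k - 1 - r - i) (by omega); omega)).mp
        intro i hi
        have h2 := h (k - r - 1 - i) (by omega)
        rw [low _ (by omega),
          show k - 1 - r - (k - r - 1 - i) = i from by omega] at h2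
        rw [h2, show k - r - 1 - i = k - 1 - r - i from by omega]
      · apply (bdigits_iff hb1 r ((l + 1) / b ^ (k - r)) _
          (fun i hi => by have := hw (k - 1 - i) (by omega); omega)).mp
        intro i hi
        have h2 := h (k - r + (r - 1 - i)) (by omega)
        rw [high _ (by omega),
          show k - 1 - (r - 1 - i) = (k - r) + i from by omega,
          pow_add, ← Nat.div_div_eq_div_mul] at h2
        rw [h2, show k - r + (r - 1 - i) = k - 1 - i from by omega]
    · rintro ⟨h1, h2⟩ t ht
      rcases Nat.lt_or_ge t (k - r) with htl | hth
      · rw [low t htl]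
        have h3 := (bdigits_iff hb1 (k - r) l _
          (fun i hi => by have := hw (k - 1 - r - i) (by omega); omega)).mpr h1
          (k - 1 - r - t) (by omega)
        rwa [show k - 1 - r - (k - 1 - r - t) = t from by omega] at h3
      · rw [show t = k - r + (t - (k - r)) from by omega, high _ (by omega)]
        have h3 := (bdigits_iff hb1 r ((l + 1) / b ^ (k - r)) _
          (fun i hi => by have := hw (k - 1 - i) (by omega); omega)).mpr h2
          (r - 1 - (t - (k - r))) (by omega)
        rw [Nat.div_div_eq_div_mul, ← pow_add,
          show (k - r) + (r - 1 - (t - (k - r))) = k - 1 - (t - (k - r)) from by omega] at h3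
        rwa [show k - 1 - (r - 1 - (t - (k - r))) = k - r + (t - (k - r)) from by omega] at h3
  -- uniqueness of the solution in each residue class
  have uniq : ∀ r, r < k → ∀ l, l < b ^ k →
      ((l % b ^ (k - r) = Sv r ∧ (l + 1) / b ^ (k - r) % b ^ r = Pv r) ↔
        l = Hv r * b ^ (k - r) + Sv r) := by
    intro r hr l hl
    have hS := hSlt r hr
    have hP := hPlt r hr
    have hH := hHlt r hr
    have hpow : b ^ r * b ^ (k - r) = b ^ k := by rw [← pow_add]; congr 1; omega
    have hB1 : 1 ≤ b ^ (k - r) := Nat.one_le_pow _ _ (by omega)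
    have hR1 : 1 ≤ b ^ r := Nat.one_le_pow _ _ (by omega)
    constructor
    · rintro ⟨h1, h2⟩
      obtain ⟨H', hH'def⟩ : ∃ x, x = l / b ^ (k - r) := ⟨_, rfl⟩
      have hl' : b ^ (k - r) * H' + Sv r = l := by
        rw [hH'def, ← h1]; exact Nat.div_add_mod l _
      have hH'lt : H' < b ^ r := by
        rw [hH'def, Nat.div_lt_iff_lt_mul (by omega)]
        omega
      rcases Nat.lt_or_ge (Sv r + 1) (b ^ (k - r)) with hcase | hcase
      · have hdiv : (l + 1) / b ^ (k - r) = H' := by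
          rw [show l + 1 = b ^ (k - r) * H' + (Sv r + 1) from by omega]
          rw [Nat.mul_add_div (by omega), Nat.div_eq_of_lt hcase]
          omega
        rw [hdiv, Nat.mod_eq_of_lt hH'lt] at h2
        have hHv : Hv r = H' := by
          simp only [hHvdef]
          rw [if_neg (by omega)]
          omega
        rw [hHv, Nat.mul_comm H' (b ^ (k - r))]
        omega
      · have hcase' : Sv r + 1 = b ^ (k - r) := by omega
        have hdiv : (l + 1) / b ^ (k - r) = H' + 1 := by
          rw [show l + 1 = b ^ (k - r) * (H' + 1) from by rw [Nat.mul_add, Nat.mul_one]; omega]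
          rw [Nat.mul_div_cancel_left _ (by omega)]
        rw [hdiv] at h2
        have hHv : Hv r = H' := by
          simp only [hHvdef]
          rw [if_pos hcase']
          rcases Nat.lt_or_ge (H' + 1) (b ^ r) with hc2 | hc2
          · rw [Nat.mod_eq_of_lt hc2] at h2
            rw [if_neg (by omega)]
            omega
          · have : H' + 1 = b ^ r := by omega
            rw [this, Nat.mod_self] at h2
            rw [if_pos h2.symm]
            omega
        rw [hHv, Nat.mul_comm H' (b ^ (k - r))]
        omega
    · rintro rfl
      constructor
      · rw [Nat.mul_comm (Hv r) (b ^ (k - r)), Nat.mul_add_mod]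
        exact Nat.mod_eq_of_lt hS
      · rcases Nat.lt_or_ge (Sv r + 1) (b ^ (k - r)) with hcase | hcase
        · have hHv : Hv r = Pv r := by
            simp only [hHvdef]; rw [if_neg (by omega)]
          have hdiv : (Hv r * b ^ (k - r) + Sv r + 1) / b ^ (k - r) = Hv r := by
            rw [Nat.add_assoc, Nat.mul_comm (Hv r) (b ^ (k - r)),
              Nat.mul_add_div (by omega), Nat.div_eq_of_lt hcase]
            omega
          rw [hdiv, hHv, Nat.mod_eq_of_lt hP]
        · have hcase' : Sv r + 1 = b ^ (k - r) := by omega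
          have hdiv : (Hv r * b ^ (k - r) + Sv r + 1) / b ^ (k - r) = Hv r + 1 := by
            rw [show Hv r * b ^ (k - r) + Sv r + 1 = b ^ (k - r) * (Hv r + 1) from by
              rw [Nat.mul_add, Nat.mul_one, Nat.mul_comm]; omega]
            rw [Nat.mul_div_cancel_left _ (by omega)]
          rw [hdiv]
          simp only [hHvdef] at *
          rw [if_pos hcase']
          rcases eq_or_ne (Pv r) 0 with hP0 | hP0
          · rw [if_pos hP0, show b ^ r - 1 + 1 = b ^ r from by omega, Nat.mod_self, hP0]
          · rw [if_neg hP0, show Pv r - 1 + 1 = Pv r from by omega]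
            exact Nat.mod_eq_of_lt hP
  -- the filter set is the image of `range k` under `f`
  have himg : (Finset.range (k * b ^ k)).filter (fun j => ∀ t < k, c (j + t) = w t)
      = (Finset.range k).image f := by
    ext j
    simp only [Finset.mem_filter, Finset.mem_range, Finset.mem_image]
    constructor
    · rintro ⟨hj, hcond⟩
      have hdm : k * (j / k) + j % k = j := Nat.div_add_mod j k
      have hr : j % k < k := Nat.mod_lt _ (by omega)
      have hlk : j / k < b ^ k := by
        by_contra hcon
        push_neg at hcon
        have := Nat.mul_le_mul_left k hcon
        omega
      refine ⟨j % k, hr, ?_⟩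
      have hcond' : ∀ t < k, c (k * (j / k) + j % k + t) = w t := by
        intro t ht; rw [hdm]; exact hcond t ht
      have h4 := (uniq _ hr _ hlk).mp ((hc' _ hr _ hlk).mp hcond')
      simp only [hfdef]
      rw [← h4]
      exact hdm
    · rintro ⟨r, hr, rfl⟩
      have hl0 := hl0lt r hr
      constructor
      · simp only [hfdef]
        have h1 : k * (Hv r * b ^ (k - r) + Sv r + 1) ≤ k * b ^ k :=
          Nat.mul_le_mul_left k hl0
        rw [Nat.mul_add, Nat.mul_one] at h1
        omega
      · intro t ht
        have h5 := (hc' r hr _ hl0).mpr ((uniq r hr _ hl0).mpr rfl) t ht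
        simpa only [hfdef] using h5
  rw [himg, Finset.card_image_of_injOn, Finset.card_range]
  intro r1 h1 r2 h2 he
  simp only [Finset.coe_range, Set.mem_Iio] at h1 h2
  have hmod : f r1 % k = f r2 % k := by rw [he]
  simp only [hfdef, Nat.mul_add_mod] at hmod
  rw [Nat.mod_eq_of_lt h1, Nat.mod_eq_of_lt h2] at hmod
  exact hmod
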